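/- Let X = ℂ², G = ℂ = H, and let E_H = ℂ² × ℂ → ℂ² be the trivial principal ℂ-bundle. Let ρ be the action of ℂ on ℂ² given by (z, (x, y)) ↦ (x + z, y), and let h be the holomorphic ℂ-connection on E_H associated to the ℂ-action on E_H = X × ℂ given by ρ on X and the trivial action on the fiber ℂ. Let D be the holomorphic connection on E_H defined by f ↦ df + x f·dy for holomorphic functions f on ℂ² (holomorphic sections of E_H being holomorphic functions). Then D satisfies the strong adaptedness inclusion image(J ∘ h) ⊂ image(D) (condition (Jc)), but D is not adapted to h, i.e., the condition [J ∘ h(X × {v}), D(TX)] ⊂ D(TX) for all v ∈ ℂ (condition (a1)) fails. -/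

import Mathlib

/-!
STATEMENT 14 (the second example in Section 3.1 of "Equivariant bundles and
adapted connections").

Here `X = ℂ²`, `G = ℂ = H`, and `E_H = ℂ² × ℂ → ℂ²` is the trivial principal
`ℂ`-bundle.  Since the structure group `ℂ` is abelian, the `H`-invariant vector
fields on `E_H = ℂ² × ℂ` (i.e. the sections of the Atiyah bundle `At(E_H)`)
are exactly the fields `V + g ∂_w`, encoded below as pairs `(V, g)` with
`V : ℂ² → ℂ²` a vector field on `ℂ²` and `g : ℂ² → ℂ`; their Lie bracket is
`⁅(V, g), (W, k)⁆ = ([V, W], V k - W g)`.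

* The action of `ℂ` on `ℂ²` is `ρ (z, (x, y)) = (x + z, y)`; together with the
  trivial action on the fiber it gives the `ℂ`-action on `E_H`, whose induced
  holomorphic `ℂ`-connection `h` satisfies `J ∘ h (v) = (v ∂_x, 0) = hC v`.
* The holomorphic connection `D : f ↦ df + x f dy` on `E_H` corresponds to the
  connection form `ω = x dy`, i.e. `D` sends the vector field `V` to its
  horizontal lift `ηD V = (V, ω(V))` where `ω(V) p = p.1 * (V p).2`.
* A section `a = (V, g)` of `At(E_H)` lies (pointwise) in the horizontal
  subbundle `D(TX) ⊆ At(E_H)` exactly when `g p = p.1 * (V p).2` for all `p`;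
  this is the predicate `Horiz`.
* `D` is adapted to `h` iff `⁅J ∘ h (v), D V⁆` lies in `D(TX)` for every
  `v ∈ ℂ` and every holomorphic vector field `V` on `ℂ²` (condition (a1)), and
  the strong adaptedness inclusion `image (J ∘ h) ⊆ image D` (condition (Jc))
  says that `J ∘ h (v)` lies in `D(TX)` for every `v ∈ ℂ`.

The statement: condition (Jc) holds for `D`, while condition (a1) fails.
-/

/-- Vector fields on `ℂ²`. -/
abbrev VF2 : Type := (ℂ × ℂ) → (ℂ × ℂ)

/-- The Lie bracket of vector fields on `ℂ²`. -/
noncomputable def brkt (V W : VF2) : VF2 :=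
  fun p => fderiv ℂ W p (V p) - fderiv ℂ V p (W p)

/-- Sections of the Atiyah bundle of the trivial principal `ℂ`-bundle
`ℂ² × ℂ → ℂ²`: pairs `(V, g)` standing for the invariant field `V + g ∂_w`. -/
abbrev AtTriv : Type := VF2 × ((ℂ × ℂ) → ℂ)

/-- The Lie bracket on sections of the Atiyah bundle. -/
noncomputable def brktAt (a b : AtTriv) : AtTriv :=
  (brkt a.1 b.1, fun p => fderiv ℂ b.2 p (a.1 p) - fderiv ℂ a.2 p (b.1 p))

/-- The holomorphic connection `D : f ↦ df + x f dy` on the trivial bundle,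
as the horizontal lift `V ↦ (V, ω(V))` with connection form `ω = x dy`. -/
noncomputable def ηD (V : VF2) : AtTriv := (V, fun p => p.1 * (V p).2)

/-- `J ∘ h (v)` for the `ℂ`-connection `h` induced by the action
`(z, (x, y, w)) ↦ (x + z, y, w)` of `ℂ` on `ℂ² × ℂ`: the constant field
`v ∂_x`. -/
def hC (v : ℂ) : AtTriv := (fun _ => (v, 0), fun _ => 0)

/-- A section of `At(E_H)` lies pointwise in the horizontal subbundle
`D(TX)` of the connection `D`. -/
def Horiz (a : AtTriv) : Prop := ∀ p : ℂ × ℂ, a.2 p = p.1 * (a.1 p).2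

theorem trivial_bundle_example_Jc_holds_but_a1_fails :
    -- image (J ∘ h) ⊆ image D   (condition (Jc)) ...
    (∀ v : ℂ, Horiz (hC v)) ∧
      -- ... but D is not adapted to h: (a1) fails
      ¬ (∀ (v : ℂ) (V : VF2), Differentiable ℂ V →
          Horiz (brktAt (hC v) (ηD V))) := by
  constructor
  · intro v p
    simp [hC]
  · intro H
    have h := H 1 (fun _ => (0, 1)) (differentiable_const _) (0, 0)
    simp only [brktAt, brkt, hC, ηD] at h
    rw [fderiv_fun_const] at h
    have h1 : fderiv ℂ (fun p : ℂ × ℂ => p.1 * ((0 : ℂ), (1 : ℂ)).2) (0, 0)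
        = (ContinuousLinearMap.fst ℂ ℂ ℂ) := by
      simp only [mul_one]
      exact fderiv_fst
    rw [h1] at h
    simp at h
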